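/- The (n+1)×(n+1) matrix T with entries T_{jk} = ∏_{i=j+1}^{k} b_{i−1}/(c_j − c_i) for j ≤ k (the empty product being 1) and T_{jk} = 0 for j > k is the two-sided inverse of S, i.e. S · T = T · S = I. -/

import Mathlib

open Finset Polynomial

lemma coeff_basis_top {F : Type*} [Field F] (s : Finset ℕ) (v : ℕ → F) {i : ℕ} (hi : i ∈ s) :
    (Lagrange.basis s v i).coeff (s.card - 1) = Lagrange.nodalWeight s v i := by
  rw [Lagrange.basis_eq_prod_sub_inv_mul_nodal_div hi, ← Lagrange.nodal_erase_eq_nodal_div hi,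
    Polynomial.coeff_C_mul]
  have hdeg : (Lagrange.nodal (s.erase i) v).natDegree = s.card - 1 := by
    rw [Polynomial.natDegree_eq_of_degree_eq_some (Lagrange.degree_nodal), Finset.card_erase_of_mem hi]
  rw [← hdeg, (Lagrange.nodal_monic).coeff_natDegree, mul_one]

lemma sum_prod_inv_sub_eq_zero {F : Type*} [Field F] (s : Finset ℕ) (v : ℕ → F)
    (hvs : Set.InjOn v s) (h2 : 2 ≤ s.card) :
    ∑ i ∈ s, ∏ j ∈ s.erase i, (v i - v j)⁻¹ = 0 := by
  have hs : s.Nonempty := Finset.card_pos.mp (by omega)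
  have h1 := Lagrange.sum_basis hvs hs
  have h3 := congrArg (fun p => Polynomial.coeff p (s.card - 1)) h1
  simp only [Polynomial.finset_sum_coeff] at h3
  rw [Finset.sum_congr rfl (fun i hi => coeff_basis_top s v hi)] at h3
  rw [Polynomial.coeff_one, if_neg (by omega)] at h3
  simpa [Lagrange.nodalWeight] using h3

lemma erase_Icc_split {j m k : ℕ} (hjm : j ≤ m) (hmk : m ≤ k) :
    (Finset.Icc j k).erase m = Finset.Ico j m ∪ Finset.Icc (m + 1) k := by
  ext i
  simp only [Finset.mem_erase, Finset.mem_Icc, Finset.mem_union, Finset.mem_Ico]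
  omega

/-- The upper triangular matrix `T` with entries
`T_{jk} = ∏_{i=j+1}^{k} b_{i−1}/(c_j − c_i)` for `j ≤ k` (and `0` otherwise)
is the two-sided inverse of `S`: `S · T = T · S = 1`. -/
theorem inverse_of_eigenvector_matrix {K : Type*} [Field K] (n : ℕ) (c b : ℕ → K)
    (hc : ∀ i j : ℕ, i ≤ n → j ≤ n → i ≠ j → c i ≠ c j)
    (S : Matrix (Fin (n + 1)) (Fin (n + 1)) K)
    (hS : ∀ j k : Fin (n + 1), S j k =
      if (j : ℕ) ≤ (k : ℕ) then
        ∏ i ∈ Finset.Ico (j : ℕ) (k : ℕ), b i / (c (k : ℕ) - c i)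
      else 0)
    (T : Matrix (Fin (n + 1)) (Fin (n + 1)) K)
    (hT : ∀ j k : Fin (n + 1), T j k =
      if (j : ℕ) ≤ (k : ℕ) then
        ∏ i ∈ Finset.Icc ((j : ℕ) + 1) (k : ℕ), b (i - 1) / (c (j : ℕ) - c i)
      else 0) :
    S * T = 1 ∧ T * S = 1 := by
  suffices h : S * T = 1 by exact ⟨h, mul_eq_one_comm.mp h⟩
  ext j k
  rw [Matrix.mul_apply, Matrix.one_apply]
  by_cases hjk : j = k
  · subst hjk
    rw [if_pos rfl]
    rw [Finset.sum_eq_single_of_mem j (Finset.mem_univ j)]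
    · rw [hS, hT, if_pos le_rfl, if_pos le_rfl, Finset.Ico_self, Finset.prod_empty,
        Finset.Icc_eq_empty (by omega), Finset.prod_empty, one_mul]
    · intro m _ hm
      have hm' : (m : ℕ) ≠ (j : ℕ) := fun h => hm (Fin.ext h)
      rcases lt_or_gt_of_ne hm' with h | h
      · rw [hS, if_neg (by omega), zero_mul]
      · rw [hT, if_neg (by omega), mul_zero]
  · rw [if_neg hjk]
    have hjk' : (j : ℕ) ≠ (k : ℕ) := fun h => hjk (Fin.ext h)
    by_cases hle : (j : ℕ) ≤ (k : ℕ)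
    · -- j < k
      have hlt : (j : ℕ) < (k : ℕ) := lt_of_le_of_ne hle hjk'
      -- rewrite sum as a nat-indexed sum
      set F : ℕ → K := fun m =>
        (if (j : ℕ) ≤ m then ∏ i ∈ Finset.Ico (j : ℕ) m, b i / (c m - c i) else 0) *
        (if m ≤ (k : ℕ) then ∏ i ∈ Finset.Icc (m + 1) (k : ℕ), b (i - 1) / (c m - c i) else 0)
        with hF
      have hterm : ∀ m : Fin (n + 1), S j m * T m k = F (m : ℕ) := by
        intro m; rw [hS, hT, hF]
      rw [Finset.sum_congr rfl (fun m _ => hterm m), Fin.sum_univ_eq_sum_range]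
      have hsub : Finset.Icc (j : ℕ) (k : ℕ) ⊆ Finset.range (n + 1) := by
        intro i hi
        simp only [Finset.mem_Icc] at hi
        simp only [Finset.mem_range]
        have := k.isLt
        omega
      rw [← Finset.sum_subset hsub]
      · -- main computation on Icc j k
        set B : K := ∏ i ∈ Finset.Ico (j : ℕ) (k : ℕ), b i with hB
        have hFval : ∀ m ∈ Finset.Icc (j : ℕ) (k : ℕ),
            F m = B * ∏ i ∈ (Finset.Icc (j : ℕ) (k : ℕ)).erase m, (c m - c i)⁻¹ := by
          intro m hm
          simp only [Finset.mem_Icc] at hm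
          obtain ⟨hjm, hmk⟩ := hm
          rw [hF]
          simp only [if_pos hjm, if_pos hmk]
          simp only [div_eq_mul_inv, Finset.prod_mul_distrib]
          have hb2 : ∏ i ∈ Finset.Icc (m + 1) (k : ℕ), b (i - 1) =
              ∏ i ∈ Finset.Ico m (k : ℕ), b i := by
            rw [← Finset.Ico_add_one_right_eq_Icc, Finset.prod_Ico_eq_prod_range,
              Finset.prod_Ico_eq_prod_range]
            refine Finset.prod_congr (by rw [Nat.add_sub_add_right]) fun i _ => by
              congr 1; omega
          rw [hb2]
          rw [erase_Icc_split hjm hmk, Finset.prod_union (by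
            simp only [Finset.disjoint_left, Finset.mem_Ico, Finset.mem_Icc]
            intro a ha hb; omega)]
          rw [hB, ← Finset.prod_Ico_consecutive b hjm hmk]
          ring
        rw [Finset.sum_congr rfl hFval, ← Finset.mul_sum]
        rw [sum_prod_inv_sub_eq_zero _ c ?_ ?_, mul_zero]
        · intro x hx y hy hxy
          rw [Finset.coe_Icc, Set.mem_Icc] at hx hy
          obtain ⟨hx1, hx2⟩ := hx
          obtain ⟨hy1, hy2⟩ := hy
          have hk := k.isLt
          by_contra hne
          exact hc x y (by omega) (by omega) hne hxy
        · rw [Nat.card_Icc]; omega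
      · intro m _ hm
        simp only [Finset.mem_Icc, not_and_or, not_le] at hm
        simp only [hF]
        rcases hm with h | h
        · rw [if_neg (show ¬ (j : ℕ) ≤ m by omega), zero_mul]
        · rw [if_neg (show ¬ m ≤ (k : ℕ) by omega), mul_zero]
    · -- k < j : every term vanishes
      refine Finset.sum_eq_zero fun m _ => ?_
      by_cases h : (j : ℕ) ≤ (m : ℕ)
      · rw [hT, if_neg (by omega), mul_zero]
      · rw [hS, if_neg h, zero_mul]
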